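/- If (ā,b̄,c̄,d̄) solves the overdamped invariance equations, then each eigenvalue of the 2×2 matrix P = [[ā,b̄],[c̄,d̄]] is an eigenvalue of Q(k). -/

import Mathlib

open Polynomial

theorem eigenvalues_of_overdamped_reduced_matrix_are_eigenvalues
    (γ₁ γ₂ ω₁ ω₂ k : ℝ) (a b c d : ℝ)
    (h1 : a^2 + b*c + ω₁^2 + k + γ₁*a = 0)
    (h2 : a*b + b*d - k + γ₁*b = 0)
    (h3 : a*c + c*d - k + γ₂*c = 0)
    (h4 : b*c + d^2 + ω₂^2 + k + γ₂*d = 0) :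
    ∀ ζ : ℂ,
      aeval ζ (Matrix.charpoly (!![a, b; c, d] : Matrix (Fin 2) (Fin 2) ℝ)) = 0 →
      aeval ζ (Matrix.charpoly (!![0, 1, 0, 0;
        -ω₁^2 - k, -γ₁, k, 0;
        0, 0, 0, 1;
        k, 0, -ω₂^2 - k, -γ₂] : Matrix (Fin 4) (Fin 4) ℝ)) = 0 := by
  intro ζ hζ
  have H1 : (a:ℂ)^2 + b*c + ω₁^2 + k + γ₁*a = 0 := by exact_mod_cast congrArg Complex.ofReal h1
  have H2 : (a:ℂ)*b + b*d - k + γ₁*b = 0 := by exact_mod_cast congrArg Complex.ofReal h2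
  have H3 : (a:ℂ)*c + c*d - k + γ₂*c = 0 := by exact_mod_cast congrArg Complex.ofReal h3
  have H4 : (b:ℂ)*c + d^2 + ω₂^2 + k + γ₂*d = 0 := by exact_mod_cast congrArg Complex.ofReal h4
  have hP : ζ^2 - (a+d)*ζ + (a*d - b*c) = 0 := by
    rw [Matrix.charpoly] at hζ
    simp [Matrix.det_fin_two, Matrix.charmatrix_apply] at hζ
    linear_combination hζ
  rw [Matrix.charpoly]
  simp [Matrix.det_succ_row_zero, Fin.sum_univ_succ, Matrix.charmatrix_apply,
    Matrix.submatrix_apply, Fin.succAbove, Matrix.diagonal_apply]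
  linear_combination ((ζ+a+γ₁)*(ζ+d+γ₂) - b*c) * hP +
    (ζ^2 + γ₂*ζ - d*γ₂ - d^2 - b*c) * H1 + (c*γ₂ + c*d + a*c) * H2 +
    (k:ℂ) * H3 + (ζ^2 + k + ω₁^2 + γ₁*ζ) * H4
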